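/- Let Γ be a connected locally finite graph with no valence-1 vertices, and let f : Γ → Γ be a combinatorial graph map which is an immersion (locally injective) and a homotopy equivalence that permutes the ends of Γ. Then f is surjective. More precisely: every edge of Γ lying on an immersed circle is in the image of f since f is π₁-surjective, and every separating edge with an acyclic complementary component is in the image since that component contains an end neighborhood. -/

import Mathlib

/-- A (Serre) graph: a vertex set, a set of darts (oriented edges), a
fixed-point-free involution reversing darts, and an initial-vertex map. -/
structure SerreGraph where
  V : Type
  E : Type
  bar : E → E
  bar_bar : ∀ e, bar (bar e) = e
  bar_ne : ∀ e, bar e ≠ e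
  src : E → V

/-- Terminal vertex of a dart. -/
def SerreGraph.tgt (G : SerreGraph) (e : G.E) : G.V := G.src (G.bar e)

/-- Local finiteness of a graph. -/
def SerreGraph.LocFin (G : SerreGraph) : Prop := ∀ v : G.V, {e : G.E | G.src e = v}.Finite

/-- A combinatorial graph morphism (darts to darts). -/
structure GraphHom (G H : SerreGraph) where
  onV : G.V → H.V
  onE : G.E → H.E
  map_bar : ∀ e, onE (G.bar e) = H.bar (onE e)
  map_src : ∀ e, onV (G.src e) = H.src (onE e)

theorem GraphHom.map_tgt {G H : SerreGraph} (f : GraphHom G H) (e : G.E) :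
    f.onV (G.tgt e) = H.tgt (f.onE e) := by
  unfold SerreGraph.tgt; rw [f.map_src, f.map_bar]

/-- Composition of graph morphisms. -/
def GraphHom.comp {G H K : SerreGraph} (g : GraphHom H K) (f : GraphHom G H) :
    GraphHom G K where
  onV := g.onV ∘ f.onV
  onE := g.onE ∘ f.onE
  map_bar e := by simp [Function.comp, f.map_bar, g.map_bar]
  map_src e := by simp [Function.comp, f.map_src, g.map_src]

/-- Identity graph morphism. -/
def GraphHom.id (G : SerreGraph) : GraphHom G G :=
  ⟨fun v => v, fun e => e, fun _ => rfl, fun _ => rfl⟩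

/-- Edge walks in a graph, with explicit endpoint bookkeeping. -/
inductive EWalk (G : SerreGraph) : G.V → G.V → Type where
  | nil (v : G.V) : EWalk G v v
  | cons {u v w : G.V} (e : G.E) (hs : G.src e = u) (ht : G.tgt e = v)
      (p : EWalk G v w) : EWalk G u w

/-- A graph is connected if any two vertices are joined by an edge walk. -/
def SerreGraph.Conn (G : SerreGraph) : Prop := ∀ u v : G.V, Nonempty (EWalk G u v)

/-- Homotopy (rel endpoints) of edge walks: the equivalence relation generated
by cancelling backtracks `e · ē`. -/
inductive Htp (G : SerreGraph) : ∀ {u v : G.V}, EWalk G u v → EWalk G u v → Prop where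
  | refl {u v} (p : EWalk G u v) : Htp G p p
  | symm {u v} {p q : EWalk G u v} : Htp G p q → Htp G q p
  | trans {u v} {p q r : EWalk G u v} : Htp G p q → Htp G q r → Htp G p r
  | cons {u v w} (e : G.E) (hs : G.src e = u) (ht : G.tgt e = v)
      {p q : EWalk G v w} : Htp G p q →
      Htp G (EWalk.cons e hs ht p) (EWalk.cons e hs ht q)
  | cancel {u v w} (e : G.E) (hs : G.src e = u) (ht : G.tgt e = v)
      (hs' : G.src (G.bar e) = v) (ht' : G.tgt (G.bar e) = u)
      (p : EWalk G u w) :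
      Htp G (EWalk.cons e hs ht (EWalk.cons (G.bar e) hs' ht' p)) p

/-- The image of an edge walk under a graph morphism. -/
def GraphHom.mapWalk {G H : SerreGraph} (f : GraphHom G H) :
    ∀ {u v : G.V}, EWalk G u v → EWalk H (f.onV u) (f.onV v)
  | _, _, .nil v => .nil (f.onV v)
  | _, _, .cons e hs ht p =>
      .cons (f.onE e) (by rw [← f.map_src, hs]) (by rw [← f.map_tgt, ht])
        (f.mapWalk p)

/-- `f` induces a bijection on fundamental groups at `v₀` (surjectivity and
injectivity on homotopy classes of loops); for connected graphs this is
equivalent to `f` being a homotopy equivalence. -/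
def InducesPi1Bij {G H : SerreGraph} (f : GraphHom G H) (v₀ : G.V) : Prop :=
  (∀ q : EWalk H (f.onV v₀) (f.onV v₀),
      ∃ p : EWalk G v₀ v₀, Htp H (f.mapWalk p) q) ∧
  (∀ p p' : EWalk G v₀ v₀, Htp H (f.mapWalk p) (f.mapWalk p') → Htp G p p')

/-- Immersions: locally injective combinatorial graph maps. -/
def IsImmersion {G H : SerreGraph} (f : GraphHom G H) : Prop :=
  ∀ a b : G.E, G.src a = G.src b → f.onE a = f.onE b → a = b

/-- Isomorphisms of graphs. -/
def IsGraphIso {G H : SerreGraph} (f : GraphHom G H) : Prop :=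
  Function.Bijective f.onV ∧ Function.Bijective f.onE

/-- `f` is the Stallings fold identifying the (closures of the) distinct darts
`e₁, e₂` with common initial vertex: it is surjective, identifies exactly the
orbits of `{e₁, e₂}` on darts and `{tgt e₁, tgt e₂}` on vertices, and nothing
else. -/
def IsFoldAt {G H : SerreGraph} (f : GraphHom G H) (e₁ e₂ : G.E) : Prop :=
  e₁ ≠ e₂ ∧ e₂ ≠ G.bar e₁ ∧ G.src e₁ = G.src e₂ ∧
  Function.Surjective f.onV ∧ Function.Surjective f.onE ∧
  f.onE e₁ = f.onE e₂ ∧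
  (∀ a b : G.E, f.onE a = f.onE b →
    a = b ∨ ({a, b} : Set G.E) = {e₁, e₂} ∨
      ({a, b} : Set G.E) = {G.bar e₁, G.bar e₂}) ∧
  (∀ u v : G.V, f.onV u = f.onV v →
    u = v ∨ ({u, v} : Set G.V) = {G.tgt e₁, G.tgt e₂})

/-- A Stallings fold. -/
def IsFold {G H : SerreGraph} (f : GraphHom G H) : Prop := ∃ e₁ e₂, IsFoldAt f e₁ e₂

/-- A type-1 Stallings fold: the folded edges have distinct terminal vertices. -/
def IsFold1 {G H : SerreGraph} (f : GraphHom G H) : Prop :=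
  ∃ e₁ e₂, IsFoldAt f e₁ e₂ ∧ G.tgt e₁ ≠ G.tgt e₂

/-- The composite `fs (n-1) ∘ ⋯ ∘ fs 0` of a chain of graph morphisms. -/
def chainComp (Gs : ℕ → SerreGraph) (fs : ∀ i : ℕ, GraphHom (Gs i) (Gs (i + 1))) :
    ∀ n : ℕ, GraphHom (Gs 0) (Gs n)
  | 0 => GraphHom.id (Gs 0)
  | n + 1 => (fs n).comp (chainComp Gs fs n)

/-- A ray in a graph: an infinite edge walk that eventually leaves every finite
set of vertices.  Rays represent ends of the graph. -/
structure GraphRay (G : SerreGraph) where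
  seq : ℕ → G.E
  chain : ∀ n, G.tgt (seq n) = G.src (seq (n + 1))
  proper : ∀ S : Set G.V, S.Finite → ∃ N, ∀ n ≥ N, G.src (seq n) ∉ S

section Aux
variable {G : SerreGraph}

lemma bar_inj : Function.Injective G.bar := by
  intro a b h
  have := congrArg G.bar h
  rwa [G.bar_bar, G.bar_bar] at this

lemma src_bar (e : G.E) : G.src (G.bar e) = G.tgt e := rfl
lemma tgt_bar (e : G.E) : G.tgt (G.bar e) = G.src e := by
  unfold SerreGraph.tgt; rw [G.bar_bar]

def wapp : ∀ {u v w : G.V}, EWalk G u v → EWalk G v w → EWalk G u w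
  | _, _, _, .nil _, q => q
  | _, _, _, .cons e hs ht p, q => .cons e hs ht (wapp p q)

def wrev : ∀ {u v : G.V}, EWalk G u v → EWalk G v u
  | _, _, .nil v => .nil v
  | _, _, .cons e _ ht p =>
      wapp (wrev p) (.cons (G.bar e) ht (by rw [tgt_bar]; assumption) (.nil _))

def wdarts : ∀ {u v : G.V}, EWalk G u v → List G.E
  | _, _, .nil _ => []
  | _, _, .cons e _ _ p => e :: wdarts p

def wvtxs : ∀ {u v : G.V}, EWalk G u v → List G.V
  | u, _, .nil _ => [u]
  | u, _, .cons _ _ _ p => u :: wvtxs p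

lemma wdarts_wapp {u v w : G.V} (p : EWalk G u v) (q : EWalk G v w) :
    wdarts (wapp p q) = wdarts p ++ wdarts q := by
  induction p with
  | nil => rfl
  | cons e hs ht p ih => simp [wapp, wdarts, ih]

lemma start_mem_wvtxs {u v : G.V} (p : EWalk G u v) : u ∈ wvtxs p := by
  cases p <;> simp [wvtxs]

lemma end_mem_wvtxs {u v : G.V} (p : EWalk G u v) : v ∈ wvtxs p := by
  induction p with
  | nil => simp [wvtxs]
  | cons e hs ht p ih => simp [wvtxs]; right; exact ih

lemma src_mem_wvtxs {u v : G.V} (p : EWalk G u v) {d : G.E} (hd : d ∈ wdarts p) :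
    G.src d ∈ wvtxs p := by
  induction p with
  | @cons u m w e hs ht p ih =>
    simp [wdarts] at hd
    rcases hd with rfl | hd
    · simp [wvtxs, hs]
    · simp [wvtxs]; right; exact ih hd
  | nil => simp [wdarts] at hd

lemma tgt_mem_wvtxs {u v : G.V} (p : EWalk G u v) {d : G.E} (hd : d ∈ wdarts p) :
    G.tgt d ∈ wvtxs p := by
  induction p with
  | @cons u m w e hs ht p ih =>
    simp [wdarts] at hd
    rcases hd with rfl | hd
    · simp [wvtxs, ht]; right; exact start_mem_wvtxs _
    · simp [wvtxs]; right; exact ih hd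
  | nil => simp [wdarts] at hd

lemma wvtxs_length {u v : G.V} (p : EWalk G u v) :
    (wvtxs p).length = (wdarts p).length + 1 := by
  induction p with
  | nil => rfl
  | cons e hs ht p ih => simp [wvtxs, wdarts, ih]

lemma wdarts_wrev {u v : G.V} (p : EWalk G u v) :
    wdarts (wrev p) = (wdarts p).reverse.map G.bar := by
  induction p with
  | nil => rfl
  | cons e hs ht p ih => simp [wrev, wdarts, wdarts_wapp, ih]

open Classical in
noncomputable def wt (e₀ d : G.E) : ZMod 2 := if d = e₀ ∨ d = G.bar e₀ then 1 else 0

lemma wt_self (e₀ : G.E) : wt e₀ e₀ = 1 := by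
  unfold wt; rw [if_pos (Or.inl rfl)]

lemma wt_of_ne {e₀ d : G.E} (h1 : d ≠ e₀) (h2 : d ≠ G.bar e₀) : wt e₀ d = 0 := by
  unfold wt; rw [if_neg]; tauto

lemma wt_bar (e₀ d : G.E) : wt e₀ (G.bar d) = wt e₀ d := by
  have h : (G.bar d = e₀ ∨ G.bar d = G.bar e₀) ↔ (d = e₀ ∨ d = G.bar e₀) := by
    constructor
    · rintro (h | h)
      · right; rw [← h, G.bar_bar]
      · left; exact bar_inj h
    · rintro (h | h)
      · right; rw [h]
      · left; rw [h, G.bar_bar]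
  unfold wt
  split_ifs with h1 h2 h2 <;> tauto

noncomputable def wpar (e₀ : G.E) : ∀ {u v : G.V}, EWalk G u v → ZMod 2
  | _, _, .nil _ => 0
  | _, _, .cons d _ _ p => wt e₀ d + wpar e₀ p

lemma wpar_wapp (e₀ : G.E) {u v w : G.V} (p : EWalk G u v) (q : EWalk G v w) :
    wpar e₀ (wapp p q) = wpar e₀ p + wpar e₀ q := by
  induction p with
  | nil => simp [wapp, wpar]
  | cons e hs ht p ih => simp [wapp, wpar, ih]; ring

lemma wpar_wrev (e₀ : G.E) {u v : G.V} (p : EWalk G u v) :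
    wpar e₀ (wrev p) = wpar e₀ p := by
  induction p with
  | nil => rfl
  | cons e hs ht p ih => simp [wrev, wpar, wpar_wapp, ih, wt_bar]; ring

lemma htp_wpar {e₀ : G.E} {u v : G.V} {p q : EWalk G u v} (h : Htp G p q) :
    wpar e₀ p = wpar e₀ q := by
  induction h with
  | refl => rfl
  | symm _ ih => exact ih.symm
  | trans _ _ ih1 ih2 => exact ih1.trans ih2
  | cons e hs ht _ ih => simp [wpar, ih]
  | cancel e hs ht hs' ht' p =>
    show wt e₀ e + (wt e₀ (G.bar e) + wpar e₀ p) = wpar e₀ p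
    rw [wt_bar, ← add_assoc, CharTwo.add_self_eq_zero, zero_add]

/-- `p` avoids the unoriented edge `{e₀, bar e₀}`. -/
def Avoid (e₀ : G.E) {u v : G.V} (p : EWalk G u v) : Prop :=
  ∀ d ∈ wdarts p, d ≠ e₀ ∧ d ≠ G.bar e₀

lemma wpar_eq_zero {e₀ : G.E} {u v : G.V} {p : EWalk G u v} (h : Avoid e₀ p) :
    wpar e₀ p = 0 := by
  induction p with
  | nil => rfl
  | cons e hs ht p ih =>
    have he := h e (by simp [wdarts])
    show wt e₀ e + wpar e₀ p = 0
    rw [wt_of_ne he.1 he.2, ih fun d hd => h d (by simp [wdarts, hd]), add_zero]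

lemma avoid_wapp {e₀ : G.E} {u v w : G.V} {p : EWalk G u v} {q : EWalk G v w}
    (hp : Avoid e₀ p) (hq : Avoid e₀ q) : Avoid e₀ (wapp p q) := by
  intro d hd; rw [wdarts_wapp] at hd
  rcases List.mem_append.1 hd with h | h
  · exact hp d h
  · exact hq d h

lemma avoid_wrev {e₀ : G.E} {u v : G.V} {p : EWalk G u v} (hp : Avoid e₀ p) :
    Avoid e₀ (wrev p) := by
  intro d hd
  rw [wdarts_wrev] at hd
  rcases List.mem_map.1 hd with ⟨a, ha, rfl⟩
  have := hp a (List.mem_reverse.1 ha)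
  refine ⟨fun h => this.2 ?_, fun h => this.1 ?_⟩
  · rw [← h, G.bar_bar]
  · exact bar_inj h

lemma avoid_bar_iff (e₀ : G.E) {u v : G.V} (p : EWalk G u v) :
    Avoid (G.bar e₀) p ↔ Avoid e₀ p := by
  unfold Avoid
  constructor <;> intro h d hd <;> obtain ⟨h1, h2⟩ := h d hd
  · rw [G.bar_bar] at h2; exact ⟨h2, h1⟩
  · rw [G.bar_bar]; exact ⟨h2, h1⟩

lemma reach_bar_iff (e₀ : G.E) (u v : G.V) :
    (∃ p : EWalk G u v, Avoid (G.bar e₀) p) ↔ ∃ p : EWalk G u v, Avoid e₀ p :=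
  exists_congr fun p => avoid_bar_iff e₀ p

/-- connected avoiding `{e₀, bar e₀}` -/
def Reach (e₀ : G.E) (u v : G.V) : Prop := ∃ p : EWalk G u v, Avoid e₀ p

lemma Reach.refl (e₀ : G.E) (u : G.V) : Reach e₀ u u :=
  ⟨.nil u, by intro d hd; simp [wdarts] at hd⟩

lemma Reach.symm {e₀ : G.E} {u v : G.V} (h : Reach e₀ u v) : Reach e₀ v u := by
  obtain ⟨p, hp⟩ := h; exact ⟨wrev p, avoid_wrev hp⟩

lemma Reach.trans {e₀ : G.E} {u v w : G.V} (h : Reach e₀ u v)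
    (h' : Reach e₀ v w) : Reach e₀ u w := by
  obtain ⟨p, hp⟩ := h; obtain ⟨q, hq⟩ := h'
  exact ⟨wapp p q, avoid_wapp hp hq⟩

lemma reach_single {e₀ d : G.E} (h1 : d ≠ e₀) (h2 : d ≠ G.bar e₀) :
    Reach (G := G) e₀ (G.src d) (G.tgt d) := by
  refine ⟨.cons d rfl rfl (.nil _), ?_⟩
  intro a ha; simp [wdarts] at ha; subst ha; exact ⟨h1, h2⟩

lemma mapWalk_wdarts {G H : SerreGraph} (f : GraphHom G H) {u v : G.V} (p : EWalk G u v) :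
    wdarts (f.mapWalk p) = (wdarts p).map f.onE := by
  induction p with
  | nil => rfl
  | cons e hs ht p ih => simp [GraphHom.mapWalk, wdarts, ih]

lemma mapWalk_avoid {e₀ : G.E} (f : GraphHom G G)
    (hnr : ∀ a, f.onE a ≠ e₀) (hnr' : ∀ a, f.onE a ≠ G.bar e₀)
    {u v : G.V} (p : EWalk G u v) : Avoid e₀ (f.mapWalk p) := by
  intro d hd
  rw [mapWalk_wdarts] at hd
  rcases List.mem_map.1 hd with ⟨a, _, rfl⟩
  exact ⟨hnr a, hnr' a⟩


lemma avoid_tail {e₀ : G.E} {u v w : G.V} {e : G.E} {hs : G.src e = u}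
    {ht : G.tgt e = v} {p : EWalk G v w}
    (h : Avoid e₀ (EWalk.cons e hs ht p)) : Avoid e₀ p := by
  intro d hd; exact h d (by simp [wdarts, hd])

lemma reach_of_mem_right {e₀ : G.E} {u v : G.V} {p : EWalk G u v}
    (hp : Avoid e₀ p) {x : G.V} (hx : x ∈ wvtxs p) : Reach e₀ x v := by
  induction p with
  | nil => simp [wvtxs] at hx; subst hx; exact Reach.refl e₀ _
  | cons e hs ht p ih =>
    simp [wvtxs] at hx
    rcases hx with rfl | hx
    · exact ⟨.cons e hs ht p, hp⟩
    · exact ih (avoid_tail hp) hx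

lemma reach_of_mem_left {e₀ : G.E} {u v : G.V} {p : EWalk G u v}
    (hp : Avoid e₀ p) {x : G.V} (hx : x ∈ wvtxs p) : Reach e₀ u x :=
  Reach.trans ⟨p, hp⟩ (Reach.symm (reach_of_mem_right hp hx))

lemma walk_prefix {u v : G.V} (p : EWalk G u v) (hnd : (wvtxs p).Nodup)
    {x : G.V} (hx : x ∈ wvtxs p) :
    ∃ q : EWalk G u x, wdarts q ⊆ wdarts p ∧ wvtxs q ⊆ wvtxs p ∧
      (wvtxs q).Nodup := by
  induction p with
  | nil =>
    simp [wvtxs] at hx; subst hx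
    exact ⟨.nil _, by simp, by simp, by simp [wvtxs]⟩
  | cons e hs ht p ih =>
    simp only [wvtxs, List.nodup_cons] at hnd
    simp only [wvtxs, List.mem_cons] at hx
    rcases hx with rfl | hx
    · refine ⟨.nil _, by simp [wdarts], ?_, by simp [wvtxs]⟩
      intro a ha; simp [wvtxs] at ha ⊢; left; exact ha
    · obtain ⟨q', hd', hv', hnd'⟩ := ih hnd.2 hx
      refine ⟨.cons e hs ht q', ?_, ?_, ?_⟩
      · simp only [wdarts]; exact List.cons_subset_cons e hd'
      · simp only [wvtxs]; exact List.cons_subset_cons _ hv'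
      · simp only [wvtxs, List.nodup_cons]
        exact ⟨fun hmem => hnd.1 (hv' hmem), hnd'⟩

lemma walk_suffix {u v : G.V} (p : EWalk G u v) (hnd : (wvtxs p).Nodup)
    {x : G.V} (hx : x ∈ wvtxs p) :
    ∃ q : EWalk G x v, wdarts q ⊆ wdarts p ∧ wvtxs q ⊆ wvtxs p ∧
      (wvtxs q).Nodup := by
  induction p with
  | nil =>
    simp [wvtxs] at hx; subst hx
    exact ⟨.nil _, by simp, by simp, by simp [wvtxs]⟩
  | cons e hs ht p ih =>
    simp only [wvtxs, List.nodup_cons] at hnd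
    simp only [wvtxs, List.mem_cons] at hx
    rcases hx with rfl | hx
    · refine ⟨.cons e hs ht p, by simp, by simp, ?_⟩
      simp only [wvtxs, List.nodup_cons]; exact hnd
    · obtain ⟨q', hd', hv', hnd'⟩ := ih hnd.2 hx
      exact ⟨q', fun a ha => by simp [wdarts]; right; exact hd' ha,
        fun a ha => by simp [wvtxs]; right; exact hv' ha, hnd'⟩

lemma erase_loops {u v : G.V} (p : EWalk G u v) :
    ∃ q : EWalk G u v, wdarts q ⊆ wdarts p ∧ (wvtxs q).Nodup := by
  induction p with
  | nil => exact ⟨.nil _, by simp, by simp [wvtxs]⟩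
  | cons e hs ht p ih =>
    obtain ⟨q', hd', hnd'⟩ := ih
    rename_i u m w
    by_cases hu : u ∈ wvtxs q'
    · obtain ⟨q'', hd'', _, hnd''⟩ := walk_suffix q' hnd' hu
      exact ⟨q'', fun a ha => by simp [wdarts]; right; exact hd' (hd'' ha), hnd''⟩
    · refine ⟨.cons e hs ht q', ?_, ?_⟩
      · simp only [wdarts]; exact List.cons_subset_cons e hd'
      · simp only [wvtxs, List.nodup_cons]; exact ⟨hu, hnd'⟩

lemma darts_src_inj {u v : G.V} {p : EWalk G u v} (hnd : (wvtxs p).Nodup)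
    {d₁ d₂ : G.E} (h1 : d₁ ∈ wdarts p) (h2 : d₂ ∈ wdarts p)
    (h : G.src d₁ = G.src d₂) : d₁ = d₂ := by
  induction p with
  | nil => simp [wdarts] at h1
  | cons e hs ht p ih =>
    simp only [wvtxs, List.nodup_cons] at hnd
    simp only [wdarts, List.mem_cons] at h1 h2
    rcases h1 with rfl | h1 <;> rcases h2 with rfl | h2
    · rfl
    · refine absurd ?_ hnd.1
      have := src_mem_wvtxs p h2; rwa [← h, hs] at this
    · refine absurd ?_ hnd.1
      have := src_mem_wvtxs p h1; rwa [h, hs] at this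
    · exact ih hnd.2 h1 h2

lemma tgt_ne_start {u v : G.V} {p : EWalk G u v} (hnd : (wvtxs p).Nodup)
    {d : G.E} (hd : d ∈ wdarts p) : G.tgt d ≠ u := by
  cases p with
  | nil => simp [wdarts] at hd
  | cons e hs ht p =>
    simp only [wvtxs, List.nodup_cons] at hnd
    simp only [wdarts, List.mem_cons] at hd
    intro hc
    rcases hd with rfl | hd
    · exact hnd.1 ((ht.symm.trans hc) ▸ start_mem_wvtxs p)
    · refine hnd.1 ?_
      have := tgt_mem_wvtxs p hd; rwa [hc] at this

lemma start_ne_end {u v : G.V} {p : EWalk G u v} (hnd : (wvtxs p).Nodup)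
    (hne : wdarts p ≠ []) : u ≠ v := by
  cases p with
  | nil => simp [wdarts] at hne
  | cons e hs ht p =>
    simp only [wvtxs, List.nodup_cons] at hnd
    intro hc
    refine hnd.1 ?_
    rw [hc]; exact end_mem_wvtxs p

lemma first_dart {u v : G.V} (p : EWalk G u v) (hne : u ≠ v) :
    ∃ (d : G.E) (m : G.V) (p' : EWalk G m v), G.src d = u ∧ G.tgt d = m ∧
      wdarts p = d :: wdarts p' ∧ wvtxs p = u :: wvtxs p' := by
  cases p with
  | nil => exact absurd rfl hne
  | cons e hs ht p => exact ⟨e, _, p, hs, ht, rfl, rfl⟩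


lemma char2_aux (a : ZMod 2) : a + (1 + a) = 1 := by
  rw [add_comm 1, ← add_assoc, CharTwo.add_self_eq_zero, zero_add]

lemma infinite_fiber {α β : Type*} {S : Set α} (hS : S.Infinite) (g : α → β)
    {T : Set β} (hT : T.Finite) (hg : ∀ u ∈ S, g u ∈ T) :
    ∃ b, {u ∈ S | g u = b}.Infinite := by
  by_contra h
  push_neg at h
  have hsub : S ⊆ ⋃ b ∈ T, {u ∈ S | g u = b} := fun u hu =>
    Set.mem_biUnion (hg u hu) ⟨hu, rfl⟩
  exact hS ((hT.biUnion fun b _ => h b).subset hsub)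

/-- simple walks from `v` to `u` avoiding `e₀` and a vertex set `A`. -/
def GP (e₀ : G.E) (v : G.V) (A : Set G.V) (u : G.V) : Prop :=
  ∃ p : EWalk G v u, Avoid e₀ p ∧ (wvtxs p).Nodup ∧ ∀ x ∈ A, x ∉ wvtxs p

def Good (e₀ : G.E) (v : G.V) (A : Set G.V) : Prop := {u | GP e₀ v A u}.Infinite

lemma fd_exists {e₀ : G.E} {v : G.V} {A : Set G.V} {u : G.V}
    (h : GP e₀ v A u) (hne : u ≠ v) :
    ∃ d : G.E, G.src d = v ∧ d ≠ e₀ ∧ d ≠ G.bar e₀ ∧ G.tgt d ∉ A ∧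
      G.tgt d ≠ v ∧ GP e₀ (G.tgt d) (insert v A) u := by
  obtain ⟨p, hav, hnd, hA⟩ := h
  obtain ⟨d, m, p', hs, ht, hdq, hvq⟩ := first_dart p hne.symm
  have hd : d ∈ wdarts p := by rw [hdq]; simp
  have hmem : m ∈ wvtxs p := by rw [hvq]; simp; right; exact start_mem_wvtxs p'
  have hndp' : v ∉ wvtxs p' ∧ (wvtxs p').Nodup := by
    have := hnd; rw [hvq] at this; simpa using this
  subst ht
  refine ⟨d, hs, (hav d hd).1, (hav d hd).2, fun hc => hA _ hc hmem, ?_, ?_⟩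
  · intro hc; exact hndp'.1 (hc ▸ start_mem_wvtxs p')
  · refine ⟨p', ?_, hndp'.2, ?_⟩
    · intro a ha; exact hav a (by rw [hdq]; simp; right; exact ha)
    · intro x hx
      rcases Set.mem_insert_iff.1 hx with rfl | hx
      · exact hndp'.1
      · intro hc; exact hA x hx (by rw [hvq]; simp; right; exact hc)

lemma good_step (hlf : G.LocFin) {e₀ : G.E} {v : G.V} {A : Set G.V}
    (hG : Good e₀ v A) :
    ∃ d : G.E, G.src d = v ∧ d ≠ e₀ ∧ d ≠ G.bar e₀ ∧ G.tgt d ∉ A ∧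
      G.tgt d ≠ v ∧ Good e₀ (G.tgt d) (insert v A) := by
  classical
  have hU : {u | GP e₀ v A u ∧ u ≠ v}.Infinite := by
    have h1 := hG.diff (Set.finite_singleton v)
    refine h1.mono ?_
    rintro u ⟨h2, h3⟩
    exact ⟨h2, by simpa using h3⟩
  obtain ⟨u₁, hu₁⟩ := hU.nonempty
  obtain ⟨dd, _⟩ := fd_exists hu₁.1 hu₁.2
  set g : G.V → G.E := fun u =>
    if h : ∃ d : G.E, G.src d = v ∧ d ≠ e₀ ∧ d ≠ G.bar e₀ ∧ G.tgt d ∉ A ∧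
      G.tgt d ≠ v ∧ GP e₀ (G.tgt d) (insert v A) u then h.choose else dd with hg
  have hgFD : ∀ u ∈ {u | GP e₀ v A u ∧ u ≠ v},
      G.src (g u) = v ∧ g u ≠ e₀ ∧ g u ≠ G.bar e₀ ∧ G.tgt (g u) ∉ A ∧
        G.tgt (g u) ≠ v ∧ GP e₀ (G.tgt (g u)) (insert v A) u := by
    intro u hu
    have h := fd_exists hu.1 hu.2
    simp only [hg, dif_pos h]
    exact h.choose_spec
  obtain ⟨d, hd⟩ := infinite_fiber hU g (T := {e : G.E | G.src e = v}) (hlf v)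
    fun u hu => (hgFD u hu).1
  obtain ⟨u₂, hu₂⟩ := hd.nonempty
  have hFDd := hgFD u₂ hu₂.1
  rw [hu₂.2] at hFDd
  refine ⟨d, hFDd.1, hFDd.2.1, hFDd.2.2.1, hFDd.2.2.2.1, hFDd.2.2.2.2.1, ?_⟩
  refine hd.mono ?_
  intro u hu
  have := (hgFD u hu.1).2.2.2.2.2
  rw [hu.2] at this
  exact this


lemma case2 (hconn : G.Conn) (hlf : G.LocFin)
    (hval : ∀ (v : G.V) (e : G.E), G.src e = v → ∃ e', e' ≠ e ∧ G.src e' = v)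
    (f : GraphHom G G) (v₀ : G.V)
    (hpi : ∀ q : EWalk G (f.onV v₀) (f.onV v₀),
      ∃ p : EWalk G v₀ v₀, Htp G (f.mapWalk p) q)
    (hends : ∀ r : GraphRay G, ∃ (r' : GraphRay G) (φ : ℕ → ℕ), StrictMono φ ∧
        ∀ n, f.onE (r'.seq n) = r.seq (φ n))
    {e₀ : G.E} (hnr : ∀ a, f.onE a ≠ e₀) (hnr' : ∀ a, f.onE a ≠ G.bar e₀)
    (hnl : G.src e₀ ≠ G.tgt e₀)
    (hnR : ¬ Reach e₀ (f.onV v₀) (G.tgt e₀)) : False := by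
  classical
  have hImg : ∀ u : G.V, Reach e₀ (f.onV v₀) (f.onV u) := by
    intro u
    obtain ⟨p⟩ := hconn v₀ u
    exact ⟨f.mapWalk p, mapWalk_avoid f hnr hnr' p⟩
  have hD0 : ∀ u : G.V, ¬ Reach e₀ (G.tgt e₀) (f.onV u) := by
    intro u h
    exact hnR ((hImg u).trans h.symm)
  have hsrcD : ¬ Reach e₀ (G.tgt e₀) (G.src e₀) := by
    intro hR
    have aux : ∀ (w u' : G.V) (p : EWalk G w u'),
        Reach e₀ (G.tgt e₀) w → Reach e₀ (G.tgt e₀) u' := by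
      intro w u' p
      induction p with
      | nil => exact id
      | @cons a b c d hs ht p ih =>
        intro hw
        apply ih
        by_cases h1 : d = e₀
        · rw [← ht, h1]; exact Reach.refl e₀ _
        · by_cases h2 : d = G.bar e₀
          · rw [← ht, h2, tgt_bar]; exact hR
          · refine hw.trans ?_
            have h3 := reach_single (G := G) h1 h2
            rw [hs, ht] at h3
            exact h3
    refine hnR (Reach.symm ?_)
    obtain ⟨p⟩ := hconn (G.tgt e₀) (f.onV v₀)
    exact aux _ _ p (Reach.refl e₀ _)
  have mach : ∀ (e' : G.E), Reach e₀ (G.tgt e₀) (G.src e') →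
      Reach e₀ (G.tgt e₀) (G.tgt e') →
      ∀ (w : G.V) (c : EWalk G w w), wpar e' c = 1 → False := by
    intro e' hr1 hr2 w c hc
    have hnr1 : ∀ a, f.onE a ≠ e' := by
      intro a h
      refine hD0 (G.src a) ?_
      rw [f.map_src, h]
      exact hr1
    have hnr2 : ∀ a, f.onE a ≠ G.bar e' := by
      intro a h
      refine hD0 (G.src a) ?_
      rw [f.map_src, h, src_bar]
      exact hr2
    obtain ⟨α⟩ := hconn (f.onV v₀) w
    have hq : wpar e' (wapp α (wapp c (wrev α))) = 1 := by
      rw [wpar_wapp, wpar_wapp, wpar_wrev, hc]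
      exact char2_aux _
    obtain ⟨p, hp⟩ := hpi (wapp α (wapp c (wrev α)))
    have h0 : wpar e' (f.mapWalk p) = 0 := wpar_eq_zero (mapWalk_avoid f hnr1 hnr2 p)
    rw [htp_wpar hp, hq] at h0
    exact one_ne_zero h0
  obtain ⟨e₁, he₁ne, he₁src⟩ := hval (G.tgt e₀) (G.bar e₀) rfl
  have he₁e : e₁ ≠ e₀ := fun h => hnl (h ▸ he₁src)
  by_cases heq : G.tgt e₁ = G.tgt e₀
  · exact mach e₁ (by rw [he₁src]; exact Reach.refl e₀ _)
      (by rw [heq]; exact Reach.refl e₀ _)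
      _ (EWalk.cons e₁ he₁src heq (.nil (G.tgt e₀)))
      (by show wt e₁ e₁ + 0 = 1; rw [wt_self, add_zero])
  · have hP : ∀ n : ℕ, ∃ (w : G.V) (q : EWalk G w (G.tgt e₀)),
        Avoid e₀ q ∧ (wvtxs q).Nodup ∧ (wdarts q).length = n + 1 := by
      intro n
      induction n with
      | zero =>
        refine ⟨G.tgt e₁,
          .cons (G.bar e₁) rfl (by rw [tgt_bar]; exact he₁src) (.nil _),
          ?_, ?_, by simp [wdarts]⟩
        · intro a ha
          simp [wdarts] at ha
          subst ha
          constructor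
          · intro h
            exact he₁ne (by rw [← G.bar_bar e₁, h])
          · intro h
            exact he₁e (bar_inj h)
        · simp [wvtxs]
          exact heq
      | succ n ih =>
        obtain ⟨w, q, hav, hnd, hlen⟩ := ih
        have hqnil : wdarts q ≠ [] := fun h => by simp [h] at hlen
        have hwne : w ≠ G.tgt e₀ := start_ne_end hnd hqnil
        obtain ⟨d, m, q', hs, ht, hdq, hvq⟩ := first_dart q hwne
        obtain ⟨d₂, hd₂ne, hd₂src⟩ := hval w d hs
        have hwD : Reach e₀ (G.tgt e₀) w := Reach.symm ⟨q, hav⟩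
        have hd₂1 : d₂ ≠ e₀ := by
          intro h
          rw [h] at hd₂src
          exact hsrcD (hd₂src ▸ hwD)
        have hd₂2 : d₂ ≠ G.bar e₀ := by
          intro h
          rw [h, src_bar] at hd₂src
          exact hwne hd₂src.symm
        by_cases hmem : G.tgt d₂ ∈ wvtxs q
        · exfalso
          obtain ⟨r, hrd, hrv, hrnd⟩ := walk_prefix q hnd hmem
          have hdmem : d ∈ wdarts q := by rw [hdq]; simp
          have havr : Avoid d₂ r := by
            intro a ha
            constructor
            · intro hc
              subst hc
              exact hd₂ne (darts_src_inj hnd (hrd ha) hdmem (by rw [hd₂src, hs]))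
            · intro hc
              have h5 := tgt_ne_start hnd (hrd ha)
              rw [hc, tgt_bar, hd₂src] at h5
              exact h5 rfl
          refine mach d₂ (by rw [hd₂src]; exact hwD)
            (hwD.trans (reach_of_mem_left hav hmem)) w
            (EWalk.cons d₂ hd₂src rfl (wrev r)) ?_
          show wt d₂ d₂ + wpar d₂ (wrev r) = 1
          rw [wt_self, wpar_wrev, wpar_eq_zero havr, add_zero]
        · refine ⟨G.tgt d₂,
            .cons (G.bar d₂) rfl (by rw [tgt_bar]; exact hd₂src) q, ?_, ?_, ?_⟩
          · intro a ha
            simp [wdarts] at ha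
            rcases ha with rfl | ha
            · constructor
              · intro h
                exact hd₂2 (by rw [← G.bar_bar d₂, h])
              · intro h
                exact hd₂1 (bar_inj h)
            · exact hav a ha
          · simp only [wvtxs, List.nodup_cons]
            exact ⟨hmem, hnd⟩
          · simp [wdarts, hlen]
    by_cases hDfin : {u : G.V | Reach e₀ (G.tgt e₀) u}.Finite
    · obtain ⟨w, q, hav, hnd, hlen⟩ := hP hDfin.toFinset.card
      have hvD : ∀ x ∈ wvtxs q, x ∈ hDfin.toFinset := by
        intro x hx
        rw [Set.Finite.mem_toFinset]
        exact Reach.symm (reach_of_mem_right hav hx)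
      have h1 : (wvtxs q).toFinset.card = (wvtxs q).length :=
        List.toFinset_card_of_nodup hnd
      have h2 : (wvtxs q).toFinset ⊆ hDfin.toFinset := fun x hx =>
        hvD x (List.mem_toFinset.1 hx)
      have h3 := Finset.card_le_card h2
      rw [h1, wvtxs_length, hlen] at h3
      omega
    · have hbase : Good e₀ (G.tgt e₀) ∅ := by
        have hDinf : Set.Infinite {u : G.V | Reach e₀ (G.tgt e₀) u} := hDfin
        refine hDinf.mono ?_
        intro u hu
        obtain ⟨p, hav⟩ := hu
        obtain ⟨q, hqd, hqnd⟩ := erase_loops p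
        exact ⟨q, fun a ha => hav a (hqd ha), hqnd, by simp⟩
      set Inv : G.E × Set G.V → Prop := fun x =>
        G.src x.1 ∉ x.2 ∧ x.1 ≠ e₀ ∧ x.1 ≠ G.bar e₀ ∧
        Reach e₀ (G.tgt e₀) (G.src x.1) ∧
        G.tgt x.1 ∉ insert (G.src x.1) x.2 ∧
        Good e₀ (G.tgt x.1) (insert (G.src x.1) x.2) with hInv
      have hstep : ∀ x : G.E × Set G.V, Inv x →
          ∃ y : G.E × Set G.V, Inv y ∧ G.src y.1 = G.tgt x.1 ∧
            y.2 = insert (G.src x.1) x.2 := by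
        rintro ⟨d, A⟩ ⟨h1, h2, h3, h4, h5, h6⟩
        obtain ⟨d₂, hsrc, hne1, hne2, hnA, hnv, hgood⟩ := good_step hlf h6
        refine ⟨(d₂, insert (G.src d) A), ⟨?_, hne1, hne2, ?_, ?_, ?_⟩, hsrc, rfl⟩
        · rw [hsrc]; exact h5
        · rw [hsrc]; exact h4.trans (reach_single h2 h3)
        · show G.tgt d₂ ∉ insert (G.src d₂) (insert (G.src d) A)
          rw [hsrc]
          intro hc
          rcases Set.mem_insert_iff.1 hc with hc | hc
          · exact hnv hc
          · exact hnA hc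
        · show Good e₀ (G.tgt d₂) (insert (G.src d₂) (insert (G.src d) A))
          rw [hsrc]
          exact hgood
      obtain ⟨d₀, hsrc₀, hne₀1, hne₀2, _, hnv₀, hgood₀⟩ := good_step hlf hbase
      have hInv₀ : Inv (d₀, ∅) := by
        refine ⟨by simp, hne₀1, hne₀2, ?_, ?_, ?_⟩
        · show Reach e₀ (G.tgt e₀) (G.src d₀)
          rw [hsrc₀]
          exact Reach.refl e₀ _
        · show G.tgt d₀ ∉ insert (G.src d₀) ∅
          rw [hsrc₀]
          intro hc
          rcases Set.mem_insert_iff.1 hc with hc | hc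
          · exact hnv₀ hc
          · exact hc
        · show Good e₀ (G.tgt d₀) (insert (G.src d₀) ∅)
          rw [hsrc₀]
          exact hgood₀
      have hstep' : ∀ t : {x : G.E × Set G.V // Inv x},
          ∃ t' : {x : G.E × Set G.V // Inv x},
            G.src t'.1.1 = G.tgt t.1.1 ∧ t'.1.2 = insert (G.src t.1.1) t.1.2 := by
        rintro ⟨x, hx⟩
        obtain ⟨y, hy, hy1, hy2⟩ := hstep x hx
        exact ⟨⟨y, hy⟩, hy1, hy2⟩
      choose F hF1 hF2 using hstep'
      set t₀ : {x : G.E × Set G.V // Inv x} := ⟨(d₀, ∅), hInv₀⟩ with ht₀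
      set st : ℕ → {x : G.E × Set G.V // Inv x} := fun n => F^[n] t₀ with hst
      have hstsucc : ∀ n, st (n + 1) = F (st n) := fun n =>
        Function.iterate_succ_apply' F n t₀
      have hchain : ∀ n, G.src (st (n + 1)).1.1 = G.tgt (st n).1.1 := by
        intro n; rw [hstsucc]; exact hF1 (st n)
      have hAA : ∀ n, (st (n + 1)).1.2 = insert (G.src (st n).1.1) (st n).1.2 := by
        intro n; rw [hstsucc]; exact hF2 (st n)
      have hmono : ∀ n m, m < n → G.src (st m).1.1 ∈ (st n).1.2 := by
        intro n
        induction n with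
        | zero => intro m hm; exact absurd hm (Nat.not_lt_zero m)
        | succ n ih =>
          intro m hm
          rw [hAA]
          rcases Nat.lt_succ_iff_lt_or_eq.1 hm with h | h
          · exact Set.mem_insert_of_mem _ (ih m h)
          · rw [h]; exact Set.mem_insert _ _
      have hinj : Function.Injective fun n => G.src (st n).1.1 := by
        intro a b hab
        simp only at hab
        rcases lt_trichotomy a b with h | h | h
        · exact absurd (hab ▸ hmono b a h) (st b).2.1
        · exact h
        · exact absurd (hab ▸ hmono a b h) (st a).2.1
      have hproper : ∀ S : Set G.V, S.Finite →
          ∃ N, ∀ n ≥ N, G.src (st n).1.1 ∉ S := by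
        intro S hS
        have hfin : ((fun n => G.src (st n).1.1) ⁻¹' S).Finite :=
          hS.preimage fun a _ b _ hab => hinj hab
        obtain ⟨N, hN⟩ := hfin.bddAbove
        refine ⟨N + 1, fun n hn hmem => ?_⟩
        have := hN hmem
        omega
      set ray : GraphRay G :=
        { seq := fun n => (st n).1.1
          chain := fun n => (hchain n).symm
          proper := hproper } with hray
      obtain ⟨r', φ, hφ, himg⟩ := hends ray
      have h0 : f.onV (G.src (r'.seq 0)) = G.src (st (φ 0)).1.1 := by
        rw [f.map_src, himg 0]
      exact hD0 (G.src (r'.seq 0)) (h0 ▸ (st (φ 0)).2.2.2.2.1)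

end Aux

theorem main_thm
    {G : SerreGraph} (hconn : G.Conn) (hV : Infinite G.V) (hlf : G.LocFin)
    (hval : ∀ (v : G.V) (e : G.E), G.src e = v → ∃ e', e' ≠ e ∧ G.src e' = v)
    (f : GraphHom G G)
    (v₀ : G.V) (hhe : InducesPi1Bij f v₀)
    (hends : ∀ r : GraphRay G, ∃ (r' : GraphRay G) (φ : ℕ → ℕ), StrictMono φ ∧
        ∀ n, f.onE (r'.seq n) = r.seq (φ n)) :
    Function.Surjective f.onV ∧ Function.Surjective f.onE := by
  obtain ⟨hpi, -⟩ := hhe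
  have hesurj : Function.Surjective f.onE := by
    intro e₀
    by_contra hne
    push_neg at hne
    have hnr : ∀ a, f.onE a ≠ e₀ := hne
    have hnr' : ∀ a, f.onE a ≠ G.bar e₀ := fun a h =>
      hnr (G.bar a) (by rw [f.map_bar, h, G.bar_bar])
    have machine0 : ∀ q : EWalk G (f.onV v₀) (f.onV v₀), wpar e₀ q = 1 → False := by
      intro q hq
      obtain ⟨p, hp⟩ := hpi q
      have h0 : wpar e₀ (f.mapWalk p) = 0 :=
        wpar_eq_zero (mapWalk_avoid f hnr hnr' p)
      rw [htp_wpar hp, hq] at h0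
      exact one_ne_zero h0
    by_cases hloop : G.src e₀ = G.tgt e₀
    · obtain ⟨α⟩ := hconn (f.onV v₀) (G.src e₀)
      refine machine0 (wapp α (.cons e₀ rfl hloop.symm (wrev α))) ?_
      show wpar e₀ (wapp α (EWalk.cons e₀ rfl hloop.symm (wrev α))) = 1
      rw [wpar_wapp]
      show wpar e₀ α + (wt e₀ e₀ + wpar e₀ (wrev α)) = 1
      rw [wt_self, wpar_wrev]
      exact char2_aux _
    · by_cases h2 : Reach e₀ (f.onV v₀) (G.tgt e₀)
      · by_cases h1 : Reach e₀ (f.onV v₀) (G.src e₀)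
        · obtain ⟨α, hα⟩ := h1
          obtain ⟨β, hβ⟩ := h2.symm
          refine machine0 (wapp α (.cons e₀ rfl rfl β)) ?_
          rw [wpar_wapp]
          show wpar e₀ α + (wt e₀ e₀ + wpar e₀ β) = 1
          rw [wt_self, wpar_eq_zero hα, wpar_eq_zero hβ, zero_add, add_zero]
        · -- use bar e₀
          refine case2 hconn hlf hval f v₀ hpi hends
            (e₀ := G.bar e₀) hnr' (fun a h => hnr a (by rwa [G.bar_bar] at h))
            ?_ ?_
          · rw [src_bar, tgt_bar]
            exact fun h => hloop h.symm
          · rw [tgt_bar]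
            intro h
            exact h1 ((reach_bar_iff e₀ _ _).1 h)
      · exact case2 hconn hlf hval f v₀ hpi hends hnr hnr' hloop h2
  refine ⟨?_, hesurj⟩
  intro v
  have : Nontrivial G.V := Infinite.instNontrivial G.V
  obtain ⟨u, hu⟩ := exists_ne v
  obtain ⟨p⟩ := hconn v u
  obtain ⟨d, m, p', hs, ht, _, _⟩ := first_dart p (Ne.symm hu)
  obtain ⟨a, ha⟩ := hesurj d
  exact ⟨G.src a, by rw [f.map_src, ha, hs]⟩


/-!
STATEMENT 10: Let `Γ` be a connected locally finite graph with no valence-1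
vertices, and `f : Γ → Γ` a combinatorial immersion which is a homotopy
equivalence (encoded by `InducesPi1Bij`, which for connected graphs is
equivalent) and permutes the ends of `Γ`.  Then `f` is surjective.

"f permutes the ends" is encoded by `hends`: every end of `Γ` (represented by a
ray `r`) is the image of an end (the image under `f` of some ray `r'` is a
subsequence of `r`, hence converges to the same end).  "No valence-1 vertices"
is `hval`: every dart at a vertex admits a second, distinct dart at the same
vertex.  The proof's case analysis — every edge either lies on an immersed
circle (and is hit because `f` is π₁-surjective) or separates off an acyclic
component (which contains an end neighborhood, so is hit because `f` permutes
the ends) — yields surjectivity of `f` on vertices and on edges.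
-/
theorem immersed_homotopy_equivalence_permuting_ends_is_surjective
    {G : SerreGraph} (hconn : G.Conn) (hV : Infinite G.V) (hlf : G.LocFin)
    (hval : ∀ (v : G.V) (e : G.E), G.src e = v → ∃ e', e' ≠ e ∧ G.src e' = v)
    (f : GraphHom G G) (himm : IsImmersion f)
    (v₀ : G.V) (hhe : InducesPi1Bij f v₀)
    (hends : ∀ r : GraphRay G, ∃ (r' : GraphRay G) (φ : ℕ → ℕ), StrictMono φ ∧
        ∀ n, f.onE (r'.seq n) = r.seq (φ n)) :
    Function.Surjective f.onV ∧ Function.Surjective f.onE := by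
  exact main_thm hconn hV hlf hval f v₀ hhe hends
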